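/- Let V₁ = (Y₁,C₁,τ₁,H₁), V₂ = (Y₂,C₂,τ₂,H₂) be infinitesimal stochastic transformations on an open set M ⊆ ℝⁿ and let V₃ = (Y₃,C₃,τ₃,H₃) = [V₁,V₂] be their bracket. Define, for each i, the operators L_i(B) = Y_i(B) + B·C_i on smooth Mat(m,m)-valued functions B and N_i(η) = Y_i(η) + τ_i·η on smooth real-valued functions η. Then the operator commutators satisfy [L₁,L₂] = L₃ (i.e. L₁(L₂(B)) − L₂(L₁(B)) = L₃(B) for every smooth B: M → Mat(m,m)) and [N₁,N₂] = N₃ (i.e. N₁(N₂(η)) − N₂(N₁(η)) = N₃(η) for every smooth η: M → ℝ). -/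

import Mathlib

open Matrix

/-- Partial derivative `∂ᵢ f` of a scalar function on `ℝⁿ`. -/
noncomputable def pd {n : ℕ} (i : Fin n) (f : (Fin n → ℝ) → ℝ) (x : Fin n → ℝ) : ℝ :=
  fderiv ℝ f x (Pi.single i 1)

/-- Action `Y(f) = Yⁱ ∂ᵢ f` of a vector field on a scalar function. -/
noncomputable def vfd {n : ℕ} (Y : (Fin n → ℝ) → Fin n → ℝ)
    (f : (Fin n → ℝ) → ℝ) (x : Fin n → ℝ) : ℝ :=
  ∑ j, Y x j * pd j f x

/-- Infinitesimal generator `L(f) = ½ (σσᵀ)^{ij} ∂ᵢ∂ⱼ f + μⁱ ∂ᵢ f` of the SDE `(μ,σ)`. -/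
noncomputable def gen {n m : ℕ} (μ : (Fin n → ℝ) → Fin n → ℝ)
    (σ : (Fin n → ℝ) → Matrix (Fin n) (Fin m) ℝ)
    (f : (Fin n → ℝ) → ℝ) (x : Fin n → ℝ) : ℝ :=
  (1 / 2) * ∑ i, ∑ j, (∑ α, σ x i α * σ x j α) * pd i (pd j f) x
    + ∑ i, μ x i * pd i f x

/-- Entrywise smoothness of a vector-valued function on a set. -/
def SmoothVec {n k : ℕ} (M : Set (Fin n → ℝ)) (f : (Fin n → ℝ) → Fin k → ℝ) : Prop :=
  ∀ i, ContDiffOn ℝ (⊤ : ℕ∞) (fun x => f x i) M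

/-- Entrywise smoothness of a matrix-valued function on a set. -/
def SmoothMat {n k l : ℕ} (M : Set (Fin n → ℝ))
    (f : (Fin n → ℝ) → Matrix (Fin k) (Fin l) ℝ) : Prop :=
  ∀ i j, ContDiffOn ℝ (⊤ : ℕ∞) (fun x => f x i j) M

/-- First component (`Y`-part) of the bracket of two infinitesimal stochastic
transformations: `[Y₁,Y₂]`. -/
noncomputable def brY {n : ℕ} (Y₁ Y₂ : (Fin n → ℝ) → Fin n → ℝ) (x : Fin n → ℝ) :
    Fin n → ℝ := fun i =>
  vfd Y₁ (fun y => Y₂ y i) x - vfd Y₂ (fun y => Y₁ y i) x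

/-- Second component (`C`-part) of the bracket: `Y₁(C₂) − Y₂(C₁) − (C₁C₂ − C₂C₁)`. -/
noncomputable def brC {n m : ℕ} (Y₁ Y₂ : (Fin n → ℝ) → Fin n → ℝ)
    (C₁ C₂ : (Fin n → ℝ) → Matrix (Fin m) (Fin m) ℝ) (x : Fin n → ℝ) :
    Matrix (Fin m) (Fin m) ℝ :=
  Matrix.of fun a b =>
    vfd Y₁ (fun y => C₂ y a b) x - vfd Y₂ (fun y => C₁ y a b) x
      - ((C₁ x * C₂ x) a b - (C₂ x * C₁ x) a b)

/-- Third component (`τ`-part) of the bracket: `Y₁(τ₂) − Y₂(τ₁)`. -/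
noncomputable def brTau {n : ℕ} (Y₁ Y₂ : (Fin n → ℝ) → Fin n → ℝ)
    (τ₁ τ₂ : (Fin n → ℝ) → ℝ) (x : Fin n → ℝ) : ℝ :=
  vfd Y₁ τ₂ x - vfd Y₂ τ₁ x

/-- Fourth component (`H`-part) of the bracket:
`Y₁(H₂) − Y₂(H₁) − (−τ₁/2 + C₁)·H₂ + (−τ₂/2 + C₂)·H₁`. -/
noncomputable def brH {n m : ℕ} (Y₁ Y₂ : (Fin n → ℝ) → Fin n → ℝ)
    (C₁ C₂ : (Fin n → ℝ) → Matrix (Fin m) (Fin m) ℝ)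
    (τ₁ τ₂ : (Fin n → ℝ) → ℝ)
    (H₁ H₂ : (Fin n → ℝ) → Fin m → ℝ) (x : Fin n → ℝ) : Fin m → ℝ := fun a =>
  vfd Y₁ (fun y => H₂ y a) x - vfd Y₂ (fun y => H₁ y a) x
    - ((-(τ₁ x) / 2) * H₂ x a + ∑ b, C₁ x a b * H₂ x b)
    + ((-(τ₂ x) / 2) * H₁ x a + ∑ b, C₂ x a b * H₁ x b)

/-- The operator `L_i(B) = Y_i(B) + B·C_i` on matrix-valued functions. -/
noncomputable def LOp {n m : ℕ} (Y : (Fin n → ℝ) → Fin n → ℝ)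
    (C : (Fin n → ℝ) → Matrix (Fin m) (Fin m) ℝ)
    (B : (Fin n → ℝ) → Matrix (Fin m) (Fin m) ℝ) (x : Fin n → ℝ) :
    Matrix (Fin m) (Fin m) ℝ :=
  Matrix.of fun a b => vfd Y (fun y => B y a b) x + (B x * C x) a b

/-- The operator `N_i(η) = Y_i(η) + τ_i·η` on real-valued functions. -/
noncomputable def NOp {n : ℕ} (Y : (Fin n → ℝ) → Fin n → ℝ)
    (τ : (Fin n → ℝ) → ℝ) (η : (Fin n → ℝ) → ℝ) (x : Fin n → ℝ) : ℝ :=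
  vfd Y η x + τ x * η x

section aux
variable {n : ℕ} {M : Set (Fin n → ℝ)} {x : Fin n → ℝ}

lemma diffAt {F : Type*} [NormedAddCommGroup F] [NormedSpace ℝ F] (hM : IsOpen M)
    {f : (Fin n → ℝ) → F} (hf : ContDiffOn ℝ (⊤:ℕ∞) f M)
    (hx : x ∈ M) : DifferentiableAt ℝ f x :=
  (hf.differentiableOn (by simp)).differentiableAt (hM.mem_nhds hx)

lemma pd_smooth (hM : IsOpen M) (i : Fin n) {f : (Fin n → ℝ) → ℝ}
    (hf : ContDiffOn ℝ (⊤:ℕ∞) f M) : ContDiffOn ℝ (⊤:ℕ∞) (pd i f) M :=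
  (hf.fderiv_of_isOpen hM (by exact_mod_cast (le_top : ((⊤:ℕ∞)+1:ℕ∞) ≤ ⊤))).clm_apply contDiffOn_const

lemma pd_mul (i : Fin n) {f g : (Fin n → ℝ) → ℝ} (hf : DifferentiableAt ℝ f x)
    (hg : DifferentiableAt ℝ g x) :
    pd i (fun y => f y * g y) x = pd i f x * g x + f x * pd i g x := by
  unfold pd
  rw [fderiv_fun_mul hf hg]
  simp only [ContinuousLinearMap.add_apply, ContinuousLinearMap.smul_apply, smul_eq_mul]
  ring

lemma pd_add (i : Fin n) {f g : (Fin n → ℝ) → ℝ} (hf : DifferentiableAt ℝ f x)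
    (hg : DifferentiableAt ℝ g x) :
    pd i (fun y => f y + g y) x = pd i f x + pd i g x := by
  unfold pd
  rw [fderiv_fun_add hf hg]; simp

lemma pd_sum (i : Fin n) {k : ℕ} {F : Fin k → (Fin n → ℝ) → ℝ}
    (h : ∀ j, DifferentiableAt ℝ (F j) x) :
    pd i (fun y => ∑ j, F j y) x = ∑ j, pd i (F j) x := by
  unfold pd
  rw [fderiv_fun_sum (fun j _ => h j)]
  simp

lemma pd_symm (hM : IsOpen M) {f : (Fin n → ℝ) → ℝ} (hf : ContDiffOn ℝ (⊤:ℕ∞) f M)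
    (hx : x ∈ M) (i j : Fin n) : pd i (pd j f) x = pd j (pd i f) x := by
  have hct : ContDiffAt ℝ (⊤:ℕ∞) f x := hf.contDiffAt (hM.mem_nhds hx)
  have hsymm := hct.isSymmSndFDerivAt (by
    have : ((2:ℕ∞):WithTop ℕ∞) ≤ ((⊤:ℕ∞):WithTop ℕ∞) := by exact_mod_cast (le_top : (2:ℕ∞) ≤ ⊤)
    simpa using this)
  have hd : DifferentiableAt ℝ (fderiv ℝ f) x :=
    diffAt hM (hf.fderiv_of_isOpen hM (by exact_mod_cast (le_top : ((⊤:ℕ∞)+1:ℕ∞) ≤ ⊤))) hx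
  have key : ∀ i j : Fin n, pd i (pd j f) x
      = fderiv ℝ (fderiv ℝ f) x (Pi.single i 1) (Pi.single j 1) := by
    intro i j
    show fderiv ℝ (fun y => (fderiv ℝ f y) (Pi.single j 1)) x (Pi.single i 1) = _
    rw [fderiv_clm_apply hd (differentiableAt_const _)]
    simp
  rw [key, key, hsymm]

lemma vfd_smooth (hM : IsOpen M) {Y : (Fin n → ℝ) → Fin n → ℝ} (hY : SmoothVec M Y)
    {f : (Fin n → ℝ) → ℝ} (hf : ContDiffOn ℝ (⊤:ℕ∞) f M) :
    ContDiffOn ℝ (⊤:ℕ∞) (vfd Y f) M := by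
  have : vfd Y f = fun x => ∑ j, Y x j * pd j f x := rfl
  rw [this]
  exact ContDiffOn.sum fun j _ => (hY j).mul (pd_smooth hM j hf)

lemma vfd_diffAt (hM : IsOpen M) {Y : (Fin n → ℝ) → Fin n → ℝ} (hY : SmoothVec M Y)
    {f : (Fin n → ℝ) → ℝ} (hf : ContDiffOn ℝ (⊤:ℕ∞) f M) (hx : x ∈ M) :
    DifferentiableAt ℝ (vfd Y f) x :=
  diffAt hM (vfd_smooth hM hY hf) hx

lemma vfd_mul {Y : (Fin n → ℝ) → Fin n → ℝ} {f g : (Fin n → ℝ) → ℝ}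
    (hf : DifferentiableAt ℝ f x) (hg : DifferentiableAt ℝ g x) :
    vfd Y (fun y => f y * g y) x = vfd Y f x * g x + f x * vfd Y g x := by
  unfold vfd
  rw [Finset.sum_mul, Finset.mul_sum, ← Finset.sum_add_distrib]
  refine Finset.sum_congr rfl fun j _ => ?_
  rw [pd_mul j hf hg]; ring

lemma vfd_add {Y : (Fin n → ℝ) → Fin n → ℝ} {f g : (Fin n → ℝ) → ℝ}
    (hf : DifferentiableAt ℝ f x) (hg : DifferentiableAt ℝ g x) :
    vfd Y (fun y => f y + g y) x = vfd Y f x + vfd Y g x := by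
  unfold vfd
  rw [← Finset.sum_add_distrib]
  refine Finset.sum_congr rfl fun j _ => ?_
  rw [pd_add j hf hg]; ring

lemma vfd_sum {Y : (Fin n → ℝ) → Fin n → ℝ} {k : ℕ} {F : Fin k → (Fin n → ℝ) → ℝ}
    (h : ∀ j, DifferentiableAt ℝ (F j) x) :
    vfd Y (fun y => ∑ j, F j y) x = ∑ j, vfd Y (F j) x := by
  unfold vfd
  rw [Finset.sum_comm]
  refine Finset.sum_congr rfl fun j _ => ?_
  rw [pd_sum j h, Finset.mul_sum]

lemma pd_vfd (hM : IsOpen M) {Y : (Fin n → ℝ) → Fin n → ℝ} (hY : SmoothVec M Y)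
    {f : (Fin n → ℝ) → ℝ} (hf : ContDiffOn ℝ (⊤:ℕ∞) f M) (hx : x ∈ M) (i : Fin n) :
    pd i (vfd Y f) x
      = ∑ j, (pd i (fun y => Y y j) x * pd j f x + Y x j * pd i (pd j f) x) := by
  have h1 : pd i (vfd Y f) x = pd i (fun y => ∑ j, Y y j * pd j f y) x := rfl
  rw [h1, pd_sum i (fun j => ((hY j).mul (pd_smooth hM j hf) |> diffAt hM) hx)]
  exact Finset.sum_congr rfl fun j _ =>
    pd_mul i (diffAt hM (hY j) hx) (diffAt hM (pd_smooth hM j hf) hx)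

lemma vfd_comm (hM : IsOpen M) {Y₁ Y₂ : (Fin n → ℝ) → Fin n → ℝ}
    (hY₁ : SmoothVec M Y₁) (hY₂ : SmoothVec M Y₂)
    {f : (Fin n → ℝ) → ℝ} (hf : ContDiffOn ℝ (⊤:ℕ∞) f M) (hx : x ∈ M) :
    vfd Y₁ (vfd Y₂ f) x - vfd Y₂ (vfd Y₁ f) x = vfd (brY Y₁ Y₂) f x := by
  have e1 : vfd Y₁ (vfd Y₂ f) x
      = ∑ i, Y₁ x i * ∑ j, (pd i (fun y => Y₂ y j) x * pd j f x
          + Y₂ x j * pd i (pd j f) x) :=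
    Finset.sum_congr rfl fun i _ => by rw [pd_vfd hM hY₂ hf hx i]
  have e2 : vfd Y₂ (vfd Y₁ f) x
      = ∑ i, Y₂ x i * ∑ j, (pd i (fun y => Y₁ y j) x * pd j f x
          + Y₁ x j * pd i (pd j f) x) :=
    Finset.sum_congr rfl fun i _ => by rw [pd_vfd hM hY₁ hf hx i]
  have e3 : vfd (brY Y₁ Y₂) f x
      = ∑ j, ((∑ i, Y₁ x i * pd i (fun y => Y₂ y j) x)
          - (∑ i, Y₂ x i * pd i (fun y => Y₁ y j) x)) * pd j f x := rfl
  rw [e1, e2, e3]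
  have hD : ∑ i, ∑ j, Y₁ x i * (Y₂ x j * pd i (pd j f) x)
      = ∑ i, ∑ j, Y₂ x i * (Y₁ x j * pd i (pd j f) x) := by
    rw [Finset.sum_comm]
    refine Finset.sum_congr rfl fun i _ => Finset.sum_congr rfl fun j _ => ?_
    rw [pd_symm hM hf hx j i]; ring
  simp only [mul_add, Finset.mul_sum, Finset.sum_add_distrib, sub_mul, Finset.sum_sub_distrib,
    Finset.sum_mul]
  rw [Finset.sum_comm (s := Finset.univ) (t := Finset.univ)
    (f := fun i j => Y₁ x i * (pd i (fun y => Y₂ y j) x * pd j f x))]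
  rw [Finset.sum_comm (s := Finset.univ) (t := Finset.univ)
    (f := fun i j => Y₂ x i * (pd i (fun y => Y₁ y j) x * pd j f x))]
  rw [hD]
  ring_nf

end aux

/-- For `V₃ = [V₁,V₂]` one has the operator identities `[L₁,L₂] = L₃` and `[N₁,N₂] = N₃`. -/
theorem statement12 {n m : ℕ} (M : Set (Fin n → ℝ)) (hM : IsOpen M)
    (Y₁ Y₂ : (Fin n → ℝ) → Fin n → ℝ)
    (C₁ C₂ : (Fin n → ℝ) → Matrix (Fin m) (Fin m) ℝ)
    (τ₁ τ₂ : (Fin n → ℝ) → ℝ) (H₁ H₂ : (Fin n → ℝ) → Fin m → ℝ)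
    (hY₁ : SmoothVec M Y₁) (hY₂ : SmoothVec M Y₂)
    (hC₁s : SmoothMat M C₁) (hC₂s : SmoothMat M C₂)
    (hτ₁ : ContDiffOn ℝ (⊤ : ℕ∞) τ₁ M) (hτ₂ : ContDiffOn ℝ (⊤ : ℕ∞) τ₂ M)
    (hH₁ : SmoothVec M H₁) (hH₂ : SmoothVec M H₂)
    (hC₁ : ∀ x ∈ M, (C₁ x)ᵀ = -(C₁ x)) (hC₂ : ∀ x ∈ M, (C₂ x)ᵀ = -(C₂ x)) :
    (∀ B : (Fin n → ℝ) → Matrix (Fin m) (Fin m) ℝ, SmoothMat M B →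
      ∀ x ∈ M, ∀ a b,
        LOp Y₁ C₁ (LOp Y₂ C₂ B) x a b - LOp Y₂ C₂ (LOp Y₁ C₁ B) x a b =
          LOp (brY Y₁ Y₂) (brC Y₁ Y₂ C₁ C₂) B x a b) ∧
    (∀ η : (Fin n → ℝ) → ℝ, ContDiffOn ℝ (⊤ : ℕ∞) η M →
      ∀ x ∈ M,
        NOp Y₁ τ₁ (NOp Y₂ τ₂ η) x - NOp Y₂ τ₂ (NOp Y₁ τ₁ η) x =
          NOp (brY Y₁ Y₂) (brTau Y₁ Y₂ τ₁ τ₂) η x) := by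
  
  constructor
  · intro B hB x hx a b
    have dB : ∀ a b : Fin m, DifferentiableAt ℝ (fun y => B y a b) x :=
      fun a b => diffAt hM (hB a b) hx
    have dC1 : ∀ c d : Fin m, DifferentiableAt ℝ (fun y => C₁ y c d) x :=
      fun c d => diffAt hM (hC₁s c d) hx
    have dC2 : ∀ c d : Fin m, DifferentiableAt ℝ (fun y => C₂ y c d) x :=
      fun c d => diffAt hM (hC₂s c d) hx
    have dvB1 : ∀ a b : Fin m, DifferentiableAt ℝ (vfd Y₁ (fun z => B z a b)) x :=
      fun a b => vfd_diffAt hM hY₁ (hB a b) hx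
    have dvB2 : ∀ a b : Fin m, DifferentiableAt ℝ (vfd Y₂ (fun z => B z a b)) x :=
      fun a b => vfd_diffAt hM hY₂ (hB a b) hx
    have e1 : LOp Y₁ C₁ (LOp Y₂ C₂ B) x a b
        = (vfd Y₁ (vfd Y₂ (fun z => B z a b)) x
            + ∑ c, (vfd Y₁ (fun z => B z a c) x * C₂ x c b
                    + B x a c * vfd Y₁ (fun z => C₂ z c b) x))
          + (∑ c, (vfd Y₂ (fun z => B z a c) x * C₁ x c b
             + (∑ d, B x a d * C₂ x d c) * C₁ x c b)) := by
      have h0 : LOp Y₁ C₁ (LOp Y₂ C₂ B) x a b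
          = vfd Y₁ (fun y => vfd Y₂ (fun z => B z a b) y + ∑ c, B y a c * C₂ y c b) x
            + ∑ c, (vfd Y₂ (fun z => B z a c) x + ∑ d, B x a d * C₂ x d c) * C₁ x c b := by
        simp only [LOp, Matrix.mul_apply, Matrix.of_apply]
      rw [h0, vfd_add (dvB2 a b)
          (DifferentiableAt.fun_sum fun c _ => (dB a c).fun_mul (dC2 c b)),
        vfd_sum (fun c => (dB a c).fun_mul (dC2 c b))]
      congr 1
      · congr 1
        exact Finset.sum_congr rfl fun c _ => vfd_mul (dB a c) (dC2 c b)
      · exact Finset.sum_congr rfl fun c _ => by ring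
    have e2 : LOp Y₂ C₂ (LOp Y₁ C₁ B) x a b
        = (vfd Y₂ (vfd Y₁ (fun z => B z a b)) x
            + ∑ c, (vfd Y₂ (fun z => B z a c) x * C₁ x c b
                    + B x a c * vfd Y₂ (fun z => C₁ z c b) x))
          + (∑ c, (vfd Y₁ (fun z => B z a c) x * C₂ x c b
             + (∑ d, B x a d * C₁ x d c) * C₂ x c b)) := by
      have h0 : LOp Y₂ C₂ (LOp Y₁ C₁ B) x a b
          = vfd Y₂ (fun y => vfd Y₁ (fun z => B z a b) y + ∑ c, B y a c * C₁ y c b) x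
            + ∑ c, (vfd Y₁ (fun z => B z a c) x + ∑ d, B x a d * C₁ x d c) * C₂ x c b := by
        simp only [LOp, Matrix.mul_apply, Matrix.of_apply]
      rw [h0, vfd_add (dvB1 a b)
          (DifferentiableAt.fun_sum fun c _ => (dB a c).fun_mul (dC1 c b)),
        vfd_sum (fun c => (dB a c).fun_mul (dC1 c b))]
      congr 1
      · congr 1
        exact Finset.sum_congr rfl fun c _ => vfd_mul (dB a c) (dC1 c b)
      · exact Finset.sum_congr rfl fun c _ => by ring
    have e3 : LOp (brY Y₁ Y₂) (brC Y₁ Y₂ C₁ C₂) B x a b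
        = vfd (brY Y₁ Y₂) (fun z => B z a b) x
          + ∑ c, B x a c * (vfd Y₁ (fun z => C₂ z c b) x - vfd Y₂ (fun z => C₁ z c b) x
              - (∑ d, C₁ x c d * C₂ x d b - ∑ d, C₂ x c d * C₁ x d b)) := by
      simp only [LOp, brC, Matrix.mul_apply, Matrix.of_apply]
    rw [e1, e2, e3, ← vfd_comm hM hY₁ hY₂ (hB a b) hx]
    have hT1 : ∑ c, (∑ d, B x a d * C₂ x d c) * C₁ x c b
        = ∑ c, B x a c * ∑ d, C₂ x c d * C₁ x d b := by
      simp only [Finset.sum_mul, Finset.mul_sum]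
      rw [Finset.sum_comm]
      exact Finset.sum_congr rfl fun c _ => Finset.sum_congr rfl fun d _ => by ring
    have hT2 : ∑ c, (∑ d, B x a d * C₁ x d c) * C₂ x c b
        = ∑ c, B x a c * ∑ d, C₁ x c d * C₂ x d b := by
      simp only [Finset.sum_mul, Finset.mul_sum]
      rw [Finset.sum_comm]
      exact Finset.sum_congr rfl fun c _ => Finset.sum_congr rfl fun d _ => by ring
    simp only [Finset.sum_add_distrib, hT1, hT2, mul_sub, Finset.sum_sub_distrib]
    ring
  · intro η hη x hx
    have dη := diffAt hM hη hx
    have dτ1 := diffAt hM hτ₁ hx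
    have dτ2 := diffAt hM hτ₂ hx
    have dv1 : DifferentiableAt ℝ (vfd Y₁ η) x := vfd_diffAt hM hY₁ hη hx
    have dv2 : DifferentiableAt ℝ (vfd Y₂ η) x := vfd_diffAt hM hY₂ hη hx
    have e1 : NOp Y₁ τ₁ (NOp Y₂ τ₂ η) x
        = vfd Y₁ (vfd Y₂ η) x + (vfd Y₁ τ₂ x * η x + τ₂ x * vfd Y₁ η x)
          + τ₁ x * (vfd Y₂ η x + τ₂ x * η x) := by
      have h0 : NOp Y₁ τ₁ (NOp Y₂ τ₂ η) x
          = vfd Y₁ (fun y => vfd Y₂ η y + τ₂ y * η y) x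
            + τ₁ x * (vfd Y₂ η x + τ₂ x * η x) := rfl
      rw [h0, vfd_add dv2 (dτ2.fun_mul dη), vfd_mul dτ2 dη]
    have e2 : NOp Y₂ τ₂ (NOp Y₁ τ₁ η) x
        = vfd Y₂ (vfd Y₁ η) x + (vfd Y₂ τ₁ x * η x + τ₁ x * vfd Y₂ η x)
          + τ₂ x * (vfd Y₁ η x + τ₁ x * η x) := by
      have h0 : NOp Y₂ τ₂ (NOp Y₁ τ₁ η) x
          = vfd Y₂ (fun y => vfd Y₁ η y + τ₁ y * η y) x
            + τ₂ x * (vfd Y₁ η x + τ₁ x * η x) := rfl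
      rw [h0, vfd_add dv1 (dτ1.fun_mul dη), vfd_mul dτ1 dη]
    have e3 : NOp (brY Y₁ Y₂) (brTau Y₁ Y₂ τ₁ τ₂) η x
        = vfd (brY Y₁ Y₂) η x + (vfd Y₁ τ₂ x - vfd Y₂ τ₁ x) * η x := rfl
    rw [e1, e2, e3, ← vfd_comm hM hY₁ hY₂ hη hx]
    ring
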